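/- Let V be a finite-dimensional real normed vector space, D ⊆ V a balanced cone spanning V, S ⊆ V an arbitrary set, and f : S → [-∞, ∞) a function that is convex on every segment [x,y] ⊆ S with x - y ∈ D. If A is a connected component of the interior of S, then either f ≡ -∞ on A or f(x) > -∞ for every x ∈ A. -/

import Mathlib

open Set Metric Filter

section Aux

variable {V : Type*} [NormedAddCommGroup V] [NormedSpace ℝ V]
    (D : Set V) (hDbal : ∀ (t : ℝ), ∀ x ∈ D, t • x ∈ D)
    (S : Set V) (f : V → EReal)
    (hconv : ∀ ⦃x y : V⦄, x ∈ S → y ∈ S → x - y ∈ D → segment ℝ x y ⊆ S →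
      ∀ ⦃a b : ℝ⦄, 0 ≤ a → 0 ≤ b → a + b = 1 →
        f (a • x + b • y) ≤ (a : EReal) * f x + (b : EReal) * f y)

include hDbal hconv in
lemma step_bot {u e : V} (he : e ∈ D) (t : ℝ)
    (hseg : segment ℝ u (u + (2*t) • e) ⊆ S) (hu : f u = ⊥) :
    f (u + t • e) = ⊥ := by
  have hxS : u + (2*t) • e ∈ S := hseg (right_mem_segment ℝ _ _)
  have hyS : u ∈ S := hseg (left_mem_segment ℝ _ _)
  have hd : (u + (2*t) • e) - u ∈ D := by
    simpa using hDbal (2*t) e he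
  have hseg' : segment ℝ (u + (2*t) • e) u ⊆ S := by
    rwa [segment_symm]
  have h := hconv hxS hyS hd hseg' (a := 1/2) (b := 1/2)
    (by norm_num) (by norm_num) (by norm_num)
  have heq : (1/2 : ℝ) • (u + (2*t) • e) + (1/2 : ℝ) • u = u + t • e := by
    rw [smul_add, smul_smul]
    module
  rw [heq, hu] at h
  have h2 : ((1/2 : ℝ) : EReal) * (⊥ : EReal) = ⊥ :=
    EReal.mul_bot_of_pos (by norm_num)
  rw [h2, EReal.add_bot] at h
  exact le_bot_iff.mp h

include hDbal hconv in
lemma walk_bot :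
    ∀ (l : List (ℝ × V)) (x : V), (∀ q ∈ l, q.2 ∈ D) → f x = ⊥ →
      (∀ u : V, ‖u - x‖ ≤ 2 * (l.map (fun q => |q.1| * ‖q.2‖)).sum → u ∈ S) →
      f (x + (l.map (fun q => q.1 • q.2)).sum) = ⊥
  | [], x, _, hx, _ => by simpa using hx
  | q :: l, x, hD, hx, hball => by
    have hsum_nonneg : 0 ≤ (l.map (fun q => |q.1| * ‖q.2‖)).sum :=
      List.sum_nonneg (by
        intro a ha
        obtain ⟨p, _, rfl⟩ := List.mem_map.mp ha
        positivity)
    have hterm : (0:ℝ) ≤ |q.1| * ‖q.2‖ := by positivity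
    -- segment from x to x + (2*q.1) • q.2 lies in S
    have hseg : segment ℝ x (x + (2*q.1) • q.2) ⊆ S := by
      intro z hz
      rw [segment_eq_image'] at hz
      obtain ⟨θ, ⟨hθ0, hθ1⟩, rfl⟩ := hz
      apply hball
      have : x + θ • (x + (2*q.1) • q.2 - x) - x = θ • (2*q.1) • q.2 := by
        simp
      rw [this]
      have : ‖θ • (2*q.1) • q.2‖ = θ * (2 * (|q.1| * ‖q.2‖)) := by
        rw [norm_smul, norm_smul, Real.norm_eq_abs, Real.norm_eq_abs,
          abs_of_nonneg hθ0, abs_mul, abs_two]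
        ring
      rw [this, List.map_cons, List.sum_cons]
      calc θ * (2 * (|q.1| * ‖q.2‖)) ≤ 1 * (2 * (|q.1| * ‖q.2‖)) := by
            apply mul_le_mul_of_nonneg_right hθ1; positivity
        _ ≤ 2 * (|q.1| * ‖q.2‖ + (l.map (fun q => |q.1| * ‖q.2‖)).sum) := by
            nlinarith
    have hx' : f (x + q.1 • q.2) = ⊥ :=
      step_bot D hDbal S f hconv (hD q (List.mem_cons_self)) q.1 hseg hx
    have hres := walk_bot l (x + q.1 • q.2)
      (fun p hp => hD p (List.mem_cons_of_mem _ hp)) hx'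
      (by
        intro u hu
        apply hball
        have h1 : ‖u - x‖ ≤ ‖u - (x + q.1 • q.2)‖ + ‖q.1 • q.2‖ := by
          have : u - x = (u - (x + q.1 • q.2)) + q.1 • q.2 := by abel
          rw [this]; exact norm_add_le _ _
        have h2 : ‖q.1 • q.2‖ = |q.1| * ‖q.2‖ := by
          rw [norm_smul, Real.norm_eq_abs]
        rw [List.map_cons, List.sum_cons]
        calc ‖u - x‖ ≤ ‖u - (x + q.1 • q.2)‖ + ‖q.1 • q.2‖ := h1
          _ ≤ 2 * (l.map (fun q => |q.1| * ‖q.2‖)).sum + |q.1| * ‖q.2‖ := by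
              rw [h2]; linarith
          _ ≤ 2 * (|q.1| * ‖q.2‖ + (l.map (fun q => |q.1| * ‖q.2‖)).sum) := by
              linarith)
    rw [List.map_cons, List.sum_cons, ← add_assoc]
    exact hres

end Aux

/-- D-convex extended-real valued functions are either ≡ -∞ or > -∞
on each connected component of the interior of their domain. -/
theorem dconvex_component_dichotomy
    {V : Type*} [NormedAddCommGroup V] [NormedSpace ℝ V] [FiniteDimensional ℝ V]
    (D : Set V) (hDbal : ∀ (t : ℝ), ∀ x ∈ D, t • x ∈ D)
    (hDspan : Submodule.span ℝ D = ⊤)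
    (S : Set V) (f : V → EReal)
    (hf_lt_top : ∀ x ∈ S, f x ≠ ⊤)
    (hconv : ∀ ⦃x y : V⦄, x ∈ S → y ∈ S → x - y ∈ D → segment ℝ x y ⊆ S →
      ∀ ⦃a b : ℝ⦄, 0 ≤ a → 0 ≤ b → a + b = 1 →
        f (a • x + b • y) ≤ (a : EReal) * f x + (b : EReal) * f y)
    (x₀ : V) (hx₀ : x₀ ∈ interior S) :
    (∀ x ∈ connectedComponentIn (interior S) x₀, f x = ⊥) ∨
      (∀ x ∈ connectedComponentIn (interior S) x₀, f x ≠ ⊥) := by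
  have walk := walk_bot D hDbal S f hconv
  classical
  -- basis contained in D
  obtain ⟨s, hsD, hspan, hli⟩ := exists_linearIndependent ℝ D
  have hsfin : s.Finite := hli.setFinite
  haveI : Fintype s := hsfin.fintype
  let E : Module.Basis s ℝ V := Module.Basis.mk hli (by rw [Subtype.range_coe, hspan, hDspan])
  have hE : ∀ i : s, E i = (i : V) := fun i => by simp [E, Module.Basis.mk_apply]
  -- the constant
  let C : ℝ := ∑ i : s, ‖LinearMap.toContinuousLinearMap (E.coord i)‖ * ‖(i : V)‖
  have hC0 : 0 ≤ C := Finset.sum_nonneg fun i _ => by positivity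
  -- key propagation lemma
  have key : ∀ x y : V, (∀ u : V, ‖u - x‖ ≤ 2 * C * ‖y - x‖ → u ∈ S) →
      f x = ⊥ → f y = ⊥ := by
    intro x y hball hx
    set v := y - x with hv
    set l : List (ℝ × V) :=
      (Finset.univ : Finset s).toList.map (fun i => (E.repr v i, (i : V))) with hl
    have hsum1 : (l.map (fun q => q.1 • q.2)).sum = v := by
      rw [hl, List.map_map]
      have := Finset.sum_map_toList (Finset.univ : Finset s)
        (fun i => E.repr v i • (i : V))
      simp only [Function.comp_def] at this ⊢
      rw [this]
      have := E.sum_repr v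
      simp only [hE] at this
      exact this
    have hsum2 : (l.map (fun q => |q.1| * ‖q.2‖)).sum ≤ C * ‖v‖ := by
      rw [hl, List.map_map]
      have := Finset.sum_map_toList (Finset.univ : Finset s)
        (fun i => |E.repr v i| * ‖(i : V)‖)
      simp only [Function.comp_def] at this ⊢
      rw [this]
      calc ∑ i : s, |E.repr v i| * ‖(i : V)‖
          ≤ ∑ i : s, ‖LinearMap.toContinuousLinearMap (E.coord i)‖ * ‖(i : V)‖ * ‖v‖ := by
            apply Finset.sum_le_sum
            intro i _
            have hb : |E.repr v i| ≤ ‖LinearMap.toContinuousLinearMap (E.coord i)‖ * ‖v‖ := by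
              have := (LinearMap.toContinuousLinearMap (E.coord i)).le_opNorm v
              simpa [Module.Basis.coord_apply] using this
            have h2 : |E.repr v i| * ‖(i:V)‖ ≤
                (‖LinearMap.toContinuousLinearMap (E.coord i)‖ * ‖v‖) * ‖(i:V)‖ :=
              mul_le_mul_of_nonneg_right hb (norm_nonneg _)
            nlinarith [h2, norm_nonneg v, norm_nonneg ((i:V))]
        _ = C * ‖v‖ := by rw [← Finset.sum_mul]
    have hD' : ∀ q ∈ l, q.2 ∈ D := by
      intro q hq
      rw [hl] at hq
      obtain ⟨i, _, rfl⟩ := List.mem_map.mp hq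
      exact hsD i.2
    have := walk l x hD' hx (by
      intro u hu
      apply hball
      calc ‖u - x‖ ≤ 2 * (l.map (fun q => |q.1| * ‖q.2‖)).sum := hu
        _ ≤ 2 * (C * ‖v‖) := by linarith
        _ = 2 * C * ‖y - x‖ := by rw [hv]; ring)
    rwa [hsum1, hv, add_sub_cancel] at this
  -- the two open sets
  set U : Set V := {x | x ∈ interior S ∧ f x = ⊥} with hU
  set W : Set V := {x | x ∈ interior S ∧ f x ≠ ⊥} with hW
  have hUopen : IsOpen U := by
    rw [Metric.isOpen_iff]
    rintro x ⟨hxi, hxb⟩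
    obtain ⟨r, hr0, hrball⟩ := Metric.isOpen_iff.mp isOpen_interior x hxi
    refine ⟨r / (2 * C + 2), by positivity, ?_⟩
    intro y hy
    rw [mem_ball, dist_eq_norm] at hy
    have hyi : y ∈ interior S := hrball (by
      rw [mem_ball, dist_eq_norm]
      calc ‖y - x‖ < r / (2 * C + 2) := hy
        _ ≤ r := by rw [div_le_iff₀ (by positivity)]; nlinarith)
    refine ⟨hyi, key x y ?_ hxb⟩
    intro u hu
    have h1 : ‖u - x‖ < r := by
      calc ‖u - x‖ ≤ 2 * C * ‖y - x‖ := hu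
        _ ≤ 2 * C * (r / (2 * C + 2)) :=
            mul_le_mul_of_nonneg_left hy.le (by positivity)
        _ < r := by
            have hfrac : 2 * C / (2 * C + 2) < 1 := by
              rw [div_lt_one (by positivity)]; linarith
            calc 2 * C * (r / (2 * C + 2)) = (2 * C / (2 * C + 2)) * r := by ring
              _ < 1 * r := mul_lt_mul_of_pos_right hfrac hr0
              _ = r := one_mul r
    exact interior_subset (hrball (by rwa [mem_ball, dist_eq_norm]))
  have hWopen : IsOpen W := by
    rw [Metric.isOpen_iff]
    rintro x ⟨hxi, hxb⟩
    obtain ⟨r, hr0, hrball⟩ := Metric.isOpen_iff.mp isOpen_interior x hxi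
    refine ⟨r / (2 * C + 2), by positivity, ?_⟩
    intro y hy
    rw [mem_ball, dist_eq_norm] at hy
    have hyi : y ∈ interior S := hrball (by
      rw [mem_ball, dist_eq_norm]
      calc ‖y - x‖ < r / (2 * C + 2) := hy
        _ ≤ r := by rw [div_le_iff₀ (by positivity)]; nlinarith)
    refine ⟨hyi, ?_⟩
    intro hyb
    apply hxb
    apply key y x _ hyb
    intro u hu
    have h1 : ‖u - x‖ < r := by
      have h2 : ‖u - x‖ ≤ ‖u - y‖ + ‖y - x‖ := by
        have : u - x = (u - y) + (y - x) := by abel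
        rw [this]; exact norm_add_le _ _
      have h3 : ‖x - y‖ = ‖y - x‖ := norm_sub_rev _ _
      calc ‖u - x‖ ≤ ‖u - y‖ + ‖y - x‖ := h2
        _ ≤ 2 * C * ‖x - y‖ + ‖y - x‖ := by linarith
        _ = (2 * C + 1) * ‖y - x‖ := by rw [h3]; ring
        _ ≤ (2 * C + 1) * (r / (2 * C + 2)) :=
            mul_le_mul_of_nonneg_left hy.le (by positivity)
        _ < r := by
            have hfrac : (2 * C + 1) / (2 * C + 2) < 1 := by
              rw [div_lt_one (by positivity)]; linarith
            calc (2 * C + 1) * (r / (2 * C + 2)) = ((2 * C + 1) / (2 * C + 2)) * r := by ring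
              _ < 1 * r := mul_lt_mul_of_pos_right hfrac hr0
              _ = r := one_mul r
    exact interior_subset (hrball (by rwa [mem_ball, dist_eq_norm]))
  -- connectedness argument
  set A := connectedComponentIn (interior S) x₀ with hA
  have hAsub : A ⊆ interior S := connectedComponentIn_subset _ _
  have hAuw : A ⊆ U ∪ W := by
    intro x hx
    by_cases h : f x = ⊥
    · exact Or.inl ⟨hAsub hx, h⟩
    · exact Or.inr ⟨hAsub hx, h⟩
  have hdisj : Disjoint U W := by
    rw [Set.disjoint_left]
    rintro x ⟨_, h1⟩ ⟨_, h2⟩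
    exact h2 h1
  have hpre : IsPreconnected A := (isPreconnected_connectedComponentIn)
  rcases hpre.subset_or_subset hUopen hWopen hdisj hAuw with h | h
  · exact Or.inl fun x hx => (h hx).2
  · exact Or.inr fun x hx => (h hx).2
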